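/- If a density h on (0,1) with CDF H admits the representation h(x) = ∫ b·(1-x)^{b-1} dG(b) for a probability measure G on [1,∞), then y ↦ H̄(1 - e^{-y}) = 1 - H(1 - e^{-y}) is completely monotone on [0,∞). -/

import Mathlib

open Set MeasureTheory Filter

lemma aux_bound (k : ℕ) {δ b : ℝ} (hδ : 0 < δ) (hb : 0 ≤ b) :
    b ^ k * Real.exp (-(b * δ)) ≤ k.factorial / δ ^ k := by
  have h0 : (0:ℝ) < k.factorial := by exact_mod_cast Nat.factorial_pos k
  have h1 : (b*δ)^k / (k.factorial:ℝ) ≤ Real.exp (b*δ) := by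
    refine le_trans ?_ (Real.sum_le_exp_of_nonneg (by positivity) (k+1))
    exact Finset.single_le_sum (f := fun i => (b*δ)^i / (i.factorial:ℝ))
      (fun i _ => by positivity) (Finset.self_mem_range_succ k)
  have h2 : b^k * δ^k ≤ (k.factorial:ℝ) * Real.exp (b*δ) := by
    rw [div_le_iff₀ h0] at h1
    calc b^k*δ^k = (b*δ)^k := (mul_pow _ _ _).symm
      _ ≤ Real.exp (b*δ) * k.factorial := h1
      _ = _ := mul_comm _ _
  rw [Real.exp_neg, show b^k * (Real.exp (b*δ))⁻¹ = b^k / Real.exp (b*δ) from by ring,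
    div_le_div_iff₀ (Real.exp_pos _) (pow_pos hδ k)]
  linarith

lemma aux_cont {b : ℝ} (hb : (1:ℝ) ≤ b) : Continuous fun t : ℝ => b * (1 - t) ^ (b - 1) := by
  refine continuous_const.mul (continuous_iff_continuousAt.2 fun t => ?_)
  exact (Real.continuousAt_rpow_const _ _ (Or.inr (by linarith))).comp (by fun_prop)

lemma aux_ftc {b x : ℝ} (hb : 1 ≤ b) (hx0 : 0 ≤ x) (hx1 : x < 1) :
    ∫ t in Ioc (0:ℝ) x, b * (1-t)^(b-1) = 1 - (1-x)^b := by
  rw [← intervalIntegral.integral_of_le hx0]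
  have hder : ∀ t ∈ Set.uIcc (0:ℝ) x, HasDerivAt (fun u : ℝ => -((1-u)^b)) (b * (1-t)^(b-1)) t := by
    intro t _
    have h1 : HasDerivAt (fun u : ℝ => 1 - u) (-1) t := by
      simpa using (hasDerivAt_id t).const_sub 1
    have h2 := (Real.hasDerivAt_rpow_const (x := 1 - t) (p := b) (Or.inr hb)).comp t h1
    have h3 : HasDerivAt (fun u : ℝ => -((1-u)^b)) (-(b * (1-t)^(b-1) * -1)) t := h2.neg
    convert h3 using 1
    ring
  have := intervalIntegral.integral_eq_sub_of_hasDerivAt hder ((aux_cont hb).intervalIntegrable _ _)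
  rw [this]
  simp only [sub_zero, Real.one_rpow]
  ring

noncomputable def lapP (G : Measure ℝ) (n : ℕ) (y : ℝ) : ℝ :=
  ∫ b, (b:ℝ)^n * Real.exp (-(b*y)) ∂G

section lap
variable {G : Measure ℝ} [IsFiniteMeasure G] (hae : ∀ᵐ b ∂G, (1:ℝ) ≤ b)
include hae

lemma lapP_integrable (n : ℕ) {y : ℝ} (hy : 0 < y) :
    Integrable (fun b => (b:ℝ)^n * Real.exp (-(b*y))) G := by
  refine (integrable_const ((n.factorial : ℝ) / y ^ n)).mono' ?_ ?_
  · exact (by fun_prop : Continuous fun b : ℝ => b^n * Real.exp (-(b*y))).aestronglyMeasurable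
  · filter_upwards [hae] with b hb
    have hb0 : (0:ℝ) ≤ b := by linarith
    rw [Real.norm_eq_abs, abs_of_nonneg (by positivity)]
    exact aux_bound n hy hb0

lemma lapP_nonneg (n : ℕ) (y : ℝ) : 0 ≤ lapP G n y := by
  refine integral_nonneg_of_ae ?_
  filter_upwards [hae] with b hb
  have hb0 : (0:ℝ) ≤ b := by linarith
  positivity

lemma lapP_antitone (n : ℕ) {s t : ℝ} (hs : 0 < s) (hst : s ≤ t) :
    lapP G n t ≤ lapP G n s := by
  refine integral_mono_ae (lapP_integrable hae n (lt_of_lt_of_le hs hst)) (lapP_integrable hae n hs) ?_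
  filter_upwards [hae] with b hb
  have hb0 : (0:ℝ) ≤ b := by linarith
  have : b * s ≤ b * t := mul_le_mul_of_nonneg_left hst hb0
  have := Real.exp_le_exp.2 (neg_le_neg this)
  exact mul_le_mul_of_nonneg_left this (by positivity)

lemma lapP_hasDeriv (n : ℕ) {y : ℝ} (hy : 0 < y) :
    HasDerivAt (lapP G n) (-(lapP G (n+1) y)) y := by
  have h2 : (0:ℝ) < y/2 := by linarith
  have key := hasDerivAt_integral_of_dominated_loc_of_deriv_le (μ := G)
      (F := fun x b => (b:ℝ)^n * Real.exp (-(b*x)))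
      (F' := fun x b => -((b:ℝ)^(n+1) * Real.exp (-(b*x))))
      (x₀ := y) (bound := fun _ => ((n+1).factorial : ℝ) / (y/2) ^ (n+1))
      (s := Metric.ball y (y/2)) (Metric.ball_mem_nhds y h2)
      (Eventually.of_forall fun x =>
        (by fun_prop : Continuous fun b : ℝ => b^n * Real.exp (-(b*x))).aestronglyMeasurable)
      (lapP_integrable hae n hy)
      ((by fun_prop : Continuous fun b : ℝ => -(b^(n+1) * Real.exp (-(b*y)))).aestronglyMeasurable)
      ?_ (integrable_const _) ?_
  · have := key.2
    rw [show (∫ b, -((b:ℝ)^(n+1) * Real.exp (-(b*y))) ∂G) = -(lapP G (n+1) y) from by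
      rw [integral_neg]; rfl] at this
    exact this
  · filter_upwards [hae] with b hb
    intro x hx
    have hxy : y/2 ≤ x := by
      have h := Metric.mem_ball.1 hx
      rw [Real.dist_eq] at h
      have := abs_lt.1 h
      linarith [this.1]
    have hb0 : (0:ℝ) ≤ b := by linarith
    rw [norm_neg, Real.norm_eq_abs, abs_of_nonneg (by positivity)]
    calc b^(n+1) * Real.exp (-(b*x)) ≤ b^(n+1) * Real.exp (-(b*(y/2))) := by
          have : b * (y/2) ≤ b * x := mul_le_mul_of_nonneg_left hxy hb0
          exact mul_le_mul_of_nonneg_left (Real.exp_le_exp.2 (by linarith)) (by positivity)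
      _ ≤ _ := aux_bound (n+1) h2 hb0
  · filter_upwards [hae] with b hb
    intro x hx
    have hd : HasDerivAt (fun x : ℝ => -(b*x)) (-b) x := by
      have h := ((hasDerivAt_id x).const_mul b).neg
      rw [mul_one] at h
      exact h
    have := (hd.exp.const_mul ((b:ℝ)^n))
    refine this.congr_deriv ?_
    ring

end lap

/-- Completely monotone on `[0,∞)`. -/
def CompletelyMonotoneOn01 (φ : ℝ → ℝ) : Prop :=
  ∀ (n : ℕ) (y : ℝ), 0 ≤ y → 0 ≤ (-1 : ℝ) ^ n * iteratedDeriv n φ y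

/-- if `h(x) = ∫ b (1-x)^{b-1} dG(b)` for a probability measure `G`
on `[1,∞)`, then `y ↦ 1 - H(1 - e^{-y})` is completely monotone on `[0,∞)`. -/
theorem beta_1b_mixture_completely_monotone
    (G : Measure ℝ) [IsProbabilityMeasure G] (hG : G (Ici (1:ℝ)) = 1)
    (h H : ℝ → ℝ)
    (hh : ∀ x ∈ Ioo (0:ℝ) 1, h x = ∫ b, b * (1 - x) ^ (b - 1) ∂G)
    (hH : ∀ x ∈ Icc (0:ℝ) 1, H x = ∫ t in Ioc (0:ℝ) x, h t) :
    CompletelyMonotoneOn01 (fun y => 1 - H (1 - Real.exp (-y))) := by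
  have hae : ∀ᵐ b ∂G, (1:ℝ) ≤ b := by
    have hc : G (Ici (1:ℝ))ᶜ = 0 := by
      have := measure_compl (measurableSet_Ici (a := (1:ℝ))) (measure_ne_top G _)
      rw [hG, measure_univ] at this
      simpa using this
    rw [ae_iff, show {a : ℝ | ¬ (1:ℝ) ≤ a} = (Ici (1:ℝ))ᶜ from by ext b; simp]
    exact hc
  set φ : ℝ → ℝ := fun y => 1 - H (1 - Real.exp (-y)) with hφ
  -- the key representation
  have hH0 : H 0 = 0 := by
    rw [hH 0 ⟨le_refl _, zero_le_one⟩, Set.Ioc_self]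
    simp
  have key : ∀ y : ℝ, 0 < y → φ y = lapP G 0 y := by
    intro y hy
    set x : ℝ := 1 - Real.exp (-y) with hxdef
    have hex : Real.exp (-y) < 1 := Real.exp_lt_one_iff.2 (by linarith)
    have hx0 : 0 < x := by simp only [hxdef]; linarith
    have hx1 : x < 1 := by
      have := Real.exp_pos (-y)
      simp only [hxdef]; linarith
    -- Fubini
    have hmeas : AEStronglyMeasurable (Function.uncurry fun b t : ℝ => b * (1-t)^(b-1))
        (G.prod (volume.restrict (Ioc 0 x))) := by
      apply Measurable.aestronglyMeasurable
      exact measurable_fst.mul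
        ((measurable_const.sub measurable_snd).pow (measurable_fst.sub measurable_const))
    have heqnorm : ∀ᵐ b ∂G, (∫ t in Ioc (0:ℝ) x, ‖b * (1-t)^(b-1)‖) = 1 - (1-x)^b := by
      filter_upwards [hae] with b hb
      rw [← aux_ftc hb hx0.le hx1]
      refine setIntegral_congr_fun measurableSet_Ioc (fun t ht => ?_)
      have h1t : (0:ℝ) ≤ 1 - t := by linarith [ht.2, hx1]
      have hb0 : (0:ℝ) < b := by linarith
      rw [Real.norm_eq_abs, abs_of_nonneg (by positivity)]
    have hInt : Integrable (Function.uncurry fun b t : ℝ => b * (1-t)^(b-1))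
        (G.prod (volume.restrict (Ioc 0 x))) := by
      rw [integrable_prod_iff hmeas]
      constructor
      · filter_upwards [hae] with b hb
        exact ((aux_cont hb).integrableOn_Icc).mono_set Set.Ioc_subset_Icc_self
      · have heqnorm' : (fun b : ℝ => (1:ℝ) - (1-x)^b) =ᵐ[G]
            fun b : ℝ => ∫ t in Ioc (0:ℝ) x,
              ‖Function.uncurry (fun b t : ℝ => b * (1-t)^(b-1)) (b, t)‖ := by
          filter_upwards [heqnorm] with b hb
          simpa [Function.uncurry_apply_pair] using hb.symm
        refine (integrable_const (1:ℝ)).mono' ?_ ?_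
        · exact ((measurable_const.sub
            ((measurable_const (a := (1:ℝ)-x)).pow measurable_id)).aestronglyMeasurable).congr
            heqnorm'
        · filter_upwards [heqnorm, hae] with b hb hb1
          simp only [Function.uncurry_apply_pair]
          rw [hb, Real.norm_eq_abs]
          have hp0 : (0:ℝ) ≤ (1-x)^b := Real.rpow_nonneg (by linarith) b
          have hp1 : (1-x)^b ≤ 1 := Real.rpow_le_one (by linarith) (by linarith) (by linarith)
          rw [abs_of_nonneg (by linarith)]
          linarith
    have hpowInt : Integrable (fun b : ℝ => (1-x)^b) G := by
      refine (integrable_const (1:ℝ)).mono' ?_ ?_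
      · exact ((measurable_const (a := (1:ℝ)-x)).pow measurable_id).aestronglyMeasurable
      · filter_upwards [hae] with b hb
        have hp0 : (0:ℝ) ≤ (1-x)^b := Real.rpow_nonneg (by linarith) b
        have hp1 : (1-x)^b ≤ 1 := Real.rpow_le_one (by linarith) (by linarith) (by linarith)
        rw [Real.norm_eq_abs, abs_of_nonneg hp0]
        exact hp1
    have hHx : H x = 1 - ∫ b, (1-x)^b ∂G := by
      rw [hH x ⟨hx0.le, hx1.le⟩,
        setIntegral_congr_fun measurableSet_Ioc
          (fun t ht => hh t ⟨ht.1, lt_of_le_of_lt ht.2 hx1⟩),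
        ← integral_integral_swap hInt,
        integral_congr_ae (g := fun b : ℝ => 1 - (1-x)^b) ?_,
        integral_sub (integrable_const 1) hpowInt]
      · simp [measure_univ]
      · filter_upwards [hae] with b hb
        exact aux_ftc hb hx0.le hx1
    have hrw : ∀ b : ℝ, ((1:ℝ)-x)^b = b^(0:ℕ) * Real.exp (-(b*y)) := by
      intro b
      rw [show (1:ℝ) - x = Real.exp (-y) from by simp only [hxdef]; ring,
        Real.rpow_def_of_pos (Real.exp_pos _), Real.log_exp, pow_zero, one_mul]
      ring_nf
    simp only [hφ, ← hxdef, hHx, lapP]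
    rw [show (∫ b, (1-x)^b ∂G) = ∫ b, b^(0:ℕ) * Real.exp (-(b*y)) ∂G from
      integral_congr_ae (Eventually.of_forall fun b => hrw b)]
    ring
  have hiter : ∀ n : ℕ, ∀ y : ℝ, 0 < y → iteratedDeriv n φ y = (-1:ℝ)^n * lapP G n y := by
    intro n
    induction n with
    | zero =>
      intro y hy
      simpa [iteratedDeriv_zero] using key y hy
    | succ m ih =>
      intro y hy
      rw [iteratedDeriv_succ]
      have hev : iteratedDeriv m φ =ᶠ[nhds y] fun z => (-1:ℝ)^m * lapP G m z :=
        Filter.eventuallyEq_of_mem (Ioi_mem_nhds hy) (fun z hz => ih z hz)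
      rw [hev.deriv_eq]
      have hd : HasDerivAt (fun z => (-1:ℝ)^m * lapP G m z)
          ((-1:ℝ)^m * (-(lapP G (m+1) y))) y := (lapP_hasDeriv hae m hy).const_mul _
      rw [hd.deriv, pow_succ]
      ring
  intro n y hy
  rcases hy.eq_or_lt with heq | hpos
  · subst heq
    cases n with
    | zero =>
      simp only [pow_zero, one_mul, iteratedDeriv_zero]
      show (0:ℝ) ≤ φ 0
      simp [hφ, hH0]
    | succ m =>
      rw [iteratedDeriv_succ]
      set f := iteratedDeriv m φ with hfdef
      by_cases hdiff : DifferentiableAt ℝ f 0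
      · have hcont : ContinuousAt f 0 := hdiff.continuousAt
        have hub : ∀ t : ℝ, 0 < t → lapP G m t ≤ (-1:ℝ)^m * f 0 := by
          intro t ht
          have tend : Tendsto (fun s => (-1:ℝ)^m * f s) (nhdsWithin 0 (Ioi 0))
              (nhds ((-1:ℝ)^m * f 0)) :=
            (hcont.tendsto.const_mul _).mono_left nhdsWithin_le_nhds
          refine ge_of_tendsto tend ?_
          filter_upwards [Ioo_mem_nhdsGT_of_mem
            (show (0:ℝ) ∈ Ico (0:ℝ) t from ⟨le_refl _, ht⟩)] with s hs
          have heqs : (-1:ℝ)^m * f s = lapP G m s := by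
            rw [hfdef, hiter m s hs.1, ← mul_assoc, ← mul_pow]
            norm_num
          rw [heqs]
          exact lapP_antitone hae m hs.1 hs.2.le
        have hslope : ∀ t : ℝ, 0 < t → 0 ≤ (-1:ℝ)^(m+1) * slope f 0 t := by
          intro t ht
          have h1 := hub t ht
          have h2 : (-1:ℝ)^m * f t = lapP G m t := by
            rw [hfdef, hiter m t ht, ← mul_assoc, ← mul_pow]
            norm_num
          have hs : slope f 0 t = (f t - f 0) / t := by
            rw [slope_def_field]
            simp
          rw [hs, pow_succ,
            show (-1:ℝ)^m * -1 * ((f t - f 0)/t)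
              = ((-1:ℝ)^m * f 0 - (-1:ℝ)^m * f t)/t from by ring, h2]
          apply div_nonneg _ ht.le
          linarith
        have htend : Tendsto (fun t => (-1:ℝ)^(m+1) * slope f 0 t) (nhdsWithin 0 (Ioi 0))
            (nhds ((-1:ℝ)^(m+1) * deriv f 0)) := by
          have hslopetend := hasDerivAt_iff_tendsto_slope.1 hdiff.hasDerivAt
          exact (hslopetend.mono_left (nhdsWithin_mono _ (fun s hs => ne_of_gt hs))).const_mul _
        refine ge_of_tendsto htend ?_
        filter_upwards [self_mem_nhdsWithin] with t ht
        exact hslope t ht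
      · rw [deriv_zero_of_not_differentiableAt hdiff]
        simp
  · rw [hiter n y hpos, ← mul_assoc, ← mul_pow]
    norm_num
    exact lapP_nonneg hae n y
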